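/- Let u be a convex continuous function on an open convex set Ω ⊆ ℝⁿ and let ū be its π/4-rotated potential on the open set Ω̄ = ∂ũ(Ω). Then ū is differentiable at every point of Ω̄, its gradient Dū is locally Lipschitz with Lipschitz constant 1, and on every open convex subset V ⊆ Ω̄ both functions x̄ ↦ ū(x̄) + ½|x̄|² and x̄ ↦ ½|x̄|² − ū(x̄) are convex (i.e. −Iₙ ≤ D²ū ≤ Iₙ in the a.e. sense). -/

import Mathlib

open Set Metric MeasureTheory Filter
open scoped Topology NNReal RealInnerProductSpace

noncomputable section

abbrev Euc (n : ℕ) := EuclideanSpace ℝ (Fin n)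

/-- `F(A) = ∑ arctan λᵢ(A)` for a symmetric matrix `A` (junk value `0` otherwise). -/
noncomputable def lagrangianAngle (n : ℕ) (A : Matrix (Fin n) (Fin n) ℝ) : ℝ :=
  if hA : A.IsHermitian then ∑ i, Real.arctan (hA.eigenvalues i) else 0

/-- The Hessian matrix `D²u(x)` of `u` at `x`. -/
noncomputable def hessian (n : ℕ) (u : Euc n → ℝ) (x : Euc n) : Matrix (Fin n) (Fin n) ℝ :=
  Matrix.of fun i j =>
    fderiv ℝ (fun y => fderiv ℝ u y (EuclideanSpace.single i 1)) x (EuclideanSpace.single j 1)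

def ViscositySubsolution (n : ℕ) (Ω : Set (Euc n)) (u ψ : Euc n → ℝ) : Prop :=
  ∀ φ : Euc n → ℝ, ContDiff ℝ 2 φ → ∀ x₀ ∈ Ω,
    IsLocalMaxOn (fun x => u x - φ x) Ω x₀ → ψ x₀ ≤ lagrangianAngle n (hessian n φ x₀)

def ViscositySupersolution (n : ℕ) (Ω : Set (Euc n)) (u ψ : Euc n → ℝ) : Prop :=
  ∀ φ : Euc n → ℝ, ContDiff ℝ 2 φ → ∀ x₀ ∈ Ω,
    IsLocalMinOn (fun x => u x - φ x) Ω x₀ → lagrangianAngle n (hessian n φ x₀) ≤ ψ x₀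

def ViscositySolution (n : ℕ) (Ω : Set (Euc n)) (u ψ : Euc n → ℝ) : Prop :=
  ViscositySubsolution n Ω u ψ ∧ ViscositySupersolution n Ω u ψ

/-- `u ∈ C^{k,α}(Ω)`: `u` is `k` times continuously differentiable on `Ω` and `D^k u`
is locally `α`-Hölder continuous on `Ω`. -/
def IsCkHolderOn (n k : ℕ) (α : ℝ) (u : Euc n → ℝ) (Ω : Set (Euc n)) : Prop :=
  ContDiffOn ℝ k u Ω ∧
  ∀ x ∈ Ω, ∃ U ∈ 𝓝[Ω] x, ∃ C : ℝ≥0,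
    HolderOnWith C α.toNNReal (iteratedFDerivWithin ℝ k u Ω) U

/-- The subdifferential of `w` at `x`, relative to the domain `Ω`. -/
def subdiff (n : ℕ) (Ω : Set (Euc n)) (w : Euc n → ℝ) (x : Euc n) : Set (Euc n) :=
  {p | ∀ y ∈ Ω, w x + ⟪p, y - x⟫ ≤ w y}

/-- `∂w(Ω) = ⋃_{x ∈ Ω} ∂w(x)`. -/
def subdiffImage (n : ℕ) (Ω : Set (Euc n)) (w : Euc n → ℝ) : Set (Euc n) :=
  ⋃ x ∈ Ω, subdiff n Ω w x

/-- `ũ(x) = s·u(x) + (c/2)|x|²` with `c = s = 1/√2`. -/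
noncomputable def tildePot (n : ℕ) (u : Euc n → ℝ) : Euc n → ℝ :=
  fun x => (Real.sqrt 2)⁻¹ * u x + (2 * Real.sqrt 2)⁻¹ * ‖x‖ ^ 2

/-- The Legendre transform `f*(p) = sup_{x ∈ Ω} (⟨x, p⟩ − f(x))`. -/
noncomputable def legendreTransform (n : ℕ) (Ω : Set (Euc n)) (f : Euc n → ℝ) (p : Euc n) : ℝ :=
  sSup ((fun x => ⟪x, p⟫ - f x) '' Ω)

/-- The π/4-rotated potential `ū`, defined by `s·ū(p) − (c/2)|p|² = −ũ*(p)`. -/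
noncomputable def rotPotential (n : ℕ) (Ω : Set (Euc n)) (u : Euc n → ℝ) : Euc n → ℝ :=
  fun p => Real.sqrt 2 *
    ((2 * Real.sqrt 2)⁻¹ * ‖p‖ ^ 2 - legendreTransform n Ω (tildePot n u) p)

/-- The VMO modulus `ω(r)` of `v` on `Ω`. -/
noncomputable def vmoModulus (n : ℕ) (Ω : Set (Euc n)) (v : Euc n → ℝ) (r : ℝ) : ℝ :=
  ⨆ x₀ ∈ Ω, ⨆ ρ ∈ Set.Ioc (0:ℝ) r,
    ⨍ x in Metric.ball x₀ ρ ∩ Ω, |v x - ⨍ y in Metric.ball x₀ ρ ∩ Ω, v y|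

/-- `v ∈ VMO(Ω)`: the VMO modulus tends to `0` as `r → 0⁺`. -/
def IsVMO (n : ℕ) (Ω : Set (Euc n)) (v : Euc n → ℝ) : Prop :=
  Tendsto (vmoModulus n Ω v) (𝓝[>] (0:ℝ)) (𝓝 0)

end


section AuxSection

namespace RotAux

variable {n : ℕ}

lemma s2pos : (0:ℝ) < Real.sqrt 2 := Real.sqrt_pos.2 (by norm_num)

lemma s2sq : Real.sqrt 2 * Real.sqrt 2 = 2 := Real.mul_self_sqrt (by norm_num)

lemma normsq_expand (x y : Euc n) : ‖y‖^2 = ‖x‖^2 + 2*⟪x, y-x⟫ + ‖y-x‖^2 := by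
  rw [show y = x + (y - x) by abel, norm_add_sq_real]; abel_nf

lemma convexOn_normSq {S : Set (Euc n)} (hS : Convex ℝ S) :
    ConvexOn ℝ S (fun x => ‖x‖^2) := by
  refine ⟨hS, fun x hx y hy a b ha hb hab => ?_⟩
  simp only [smul_eq_mul]
  have h1 : ‖a•x + b•y‖^2 = a^2*‖x‖^2 + 2*(a*b)*⟪x,y⟫ + b^2*‖y‖^2 := by
    rw [norm_add_sq_real, real_inner_smul_left, real_inner_smul_right, norm_smul, norm_smul,
      Real.norm_eq_abs, Real.norm_eq_abs, abs_of_nonneg ha, abs_of_nonneg hb]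
    ring
  have h2 : ⟪x,y⟫ ≤ ‖x‖*‖y‖ := real_inner_le_norm x y
  nlinarith [sq_nonneg (‖x‖-‖y‖), mul_nonneg ha hb, norm_nonneg x, norm_nonneg y]

lemma convexOn_tildePot {S : Set (Euc n)} (hS : Convex ℝ S) {u : Euc n → ℝ}
    (hu : ConvexOn ℝ S u) : ConvexOn ℝ S (tildePot n u) := by
  have h1 : ConvexOn ℝ S (fun x => (Real.sqrt 2)⁻¹ • u x) :=
    hu.smul (by positivity)
  have h2 : ConvexOn ℝ S (fun x => (2*Real.sqrt 2)⁻¹ • ‖x‖^2) :=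
    (convexOn_normSq hS).smul (by positivity)
  have h3 := h1.add h2
  convert h3 using 1
  · rfl
  · funext x; simp only [tildePot, Pi.add_apply, smul_eq_mul]

/-- strong subgradient inequality -/
lemma strong_subgrad {S : Set (Euc n)} (hS : Convex ℝ S) {u : Euc n → ℝ}
    (hu : ConvexOn ℝ S u) {x y p : Euc n} (hx : x ∈ S) (hy : y ∈ S)
    (hp : ∀ z ∈ S, tildePot n u x + ⟪p, z - x⟫ ≤ tildePot n u z) :
    tildePot n u x + ⟪p, y - x⟫ + (2 * Real.sqrt 2)⁻¹ * ‖y - x‖ ^ 2 ≤ tildePot n u y := by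
  set c : ℝ := (Real.sqrt 2)⁻¹ with hc
  have hcpos : 0 < c := by positivity
  have hc2 : (2 * Real.sqrt 2)⁻¹ = c / 2 := by rw [mul_inv]; rw [hc]; ring
  -- key t-inequality
  have key : ∀ t ∈ Set.Ioc (0:ℝ) 1,
      ⟪p, y-x⟫ ≤ c*(u y - u x) + c*⟪x, y-x⟫ + c/2*t*‖y-x‖^2 := by
    rintro t ⟨ht0, ht1⟩
    have hz : (1-t)•x + t•y ∈ S := hS hx hy (by linarith) (le_of_lt ht0) (by ring)
    have hzeq : (1-t)•x + t•y = x + t•(y-x) := by module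
    have h1 := hp _ hz
    have h2 := hu.2 hx hy (show (0:ℝ) ≤ 1 - t by linarith) ht0.le (by ring)
    rw [hzeq] at h1 h2
    have hip : ⟪p, (x + t•(y-x)) - x⟫ = t * ⟪p, y - x⟫ := by
      rw [add_sub_cancel_left, real_inner_smul_right]
    have hnz : ‖x + t•(y-x)‖^2 = ‖x‖^2 + 2*t*⟪x,y-x⟫ + t^2*‖y-x‖^2 := by
      rw [normsq_expand x (x + t•(y-x)), add_sub_cancel_left, real_inner_smul_right,
        norm_smul, Real.norm_eq_abs, abs_of_nonneg (le_of_lt ht0)]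
      ring
    simp only [tildePot, smul_eq_mul, hc2] at h1 h2
    rw [hip, hnz] at h1
    have h2mul : c * u (x + t•(y-x)) ≤ c * ((1-t) * u x + t * u y) :=
      mul_le_mul_of_nonneg_left h2 hcpos.le
    have h7 : t * ⟪p,y-x⟫ ≤ t * (c*(u y - u x) + c*⟪x, y-x⟫ + c/2*t*‖y-x‖^2) := by
      nlinarith [h1, h2mul]
    exact le_of_mul_le_mul_left (by linarith [h7]) ht0
  -- take the limit t → 0+
  have lim : ⟪p, y-x⟫ ≤ c*(u y - u x) + c*⟪x, y-x⟫ := by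
    have hcont : Continuous (fun t : ℝ => c*(u y - u x) + c*⟪x, y-x⟫ + c/2*t*‖y-x‖^2) := by
      continuity
    have htend : Tendsto (fun t : ℝ => c*(u y - u x) + c*⟪x, y-x⟫ + c/2*t*‖y-x‖^2)
        (𝓝[>] (0:ℝ)) (𝓝 (c*(u y - u x) + c*⟪x, y-x⟫)) := by
      have h0 : Tendsto (fun t : ℝ => c*(u y - u x) + c*⟪x, y-x⟫ + c/2*t*‖y-x‖^2)
          (𝓝[>] (0:ℝ)) (𝓝 (c*(u y - u x) + c*⟪x, y-x⟫ + c/2*0*‖y-x‖^2)) :=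
        (hcont.tendsto 0).mono_left nhdsWithin_le_nhds
      simpa using h0
    exact ge_of_tendsto htend (Filter.eventually_of_mem
      (Ioc_mem_nhdsGT_of_mem (by constructor <;> norm_num)) key)
  -- conclude
  simp only [tildePot, smul_eq_mul, hc2]
  rw [normsq_expand x y]
  nlinarith [lim]

/-- monotonicity with strong convexity -/
lemma subgrad_mono {S : Set (Euc n)} (hS : Convex ℝ S) {u : Euc n → ℝ}
    (hu : ConvexOn ℝ S u) {x y p q : Euc n} (hx : x ∈ S) (hy : y ∈ S)
    (hp : ∀ z ∈ S, tildePot n u x + ⟪p, z - x⟫ ≤ tildePot n u z)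
    (hq : ∀ z ∈ S, tildePot n u y + ⟪q, z - y⟫ ≤ tildePot n u z) :
    (Real.sqrt 2)⁻¹ * ‖x - y‖ ^ 2 ≤ ⟪p - q, x - y⟫ := by
  have h1 := strong_subgrad hS hu hx hy hp
  have h2 := strong_subgrad hS hu hy hx hq
  have e1 : ⟪p - q, x - y⟫ = ⟪p, x - y⟫ - ⟪q, x - y⟫ := inner_sub_left _ _ _
  have e2 : ⟪p, y - x⟫ = -⟪p, x - y⟫ := by
    rw [show y - x = -(x - y) by abel, inner_neg_right]
  have e3 : ‖y - x‖ = ‖x - y‖ := norm_sub_rev _ _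
  have e4 : (2 * Real.sqrt 2)⁻¹ * 2 = (Real.sqrt 2)⁻¹ := by rw [mul_inv]; ring
  rw [e3] at h1
  rw [e2] at h1
  rw [e1]
  nlinarith [h1, h2]

lemma subgrad_dist {S : Set (Euc n)} (hS : Convex ℝ S) {u : Euc n → ℝ}
    (hu : ConvexOn ℝ S u) {x y p q : Euc n} (hx : x ∈ S) (hy : y ∈ S)
    (hp : ∀ z ∈ S, tildePot n u x + ⟪p, z - x⟫ ≤ tildePot n u z)
    (hq : ∀ z ∈ S, tildePot n u y + ⟪q, z - y⟫ ≤ tildePot n u z) :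
    ‖x - y‖ ≤ Real.sqrt 2 * ‖p - q‖ := by
  have h1 := subgrad_mono hS hu hx hy hp hq
  have h2 : ⟪p - q, x - y⟫ ≤ ‖p - q‖ * ‖x - y‖ := real_inner_le_norm _ _
  rcases eq_or_lt_of_le (norm_nonneg (x - y)) with h | h
  · rw [← h]; positivity
  · have h3 : (Real.sqrt 2)⁻¹ * ‖x - y‖ ≤ ‖p - q‖ := by
      have := h1.trans h2
      have h4 : (Real.sqrt 2)⁻¹ * ‖x-y‖ * ‖x-y‖ ≤ ‖p-q‖ * ‖x-y‖ := by nlinarith [this]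
      exact le_of_mul_le_mul_right h4 h
    calc ‖x - y‖ = Real.sqrt 2 * ((Real.sqrt 2)⁻¹ * ‖x - y‖) := by
          field_simp
      _ ≤ Real.sqrt 2 * ‖p - q‖ := by
          exact mul_le_mul_of_nonneg_left h3 s2pos.le

/-- the Legendre transform value at a subgradient -/
lemma legendre_isGreatest {Ω : Set (Euc n)} {w : Euc n → ℝ} {x p : Euc n} (hx : x ∈ Ω)
    (hp : ∀ y ∈ Ω, w x + ⟪p, y - x⟫ ≤ w y) :
    IsGreatest ((fun z => ⟪z, p⟫ - w z) '' Ω) (⟪x, p⟫ - w x) := by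
  constructor
  · exact ⟨x, hx, rfl⟩
  · rintro _ ⟨z, hz, rfl⟩
    have h1 := hp z hz
    have h2 : ⟪p, z - x⟫ = ⟪z, p⟫ - ⟪x, p⟫ := by
      rw [inner_sub_right, real_inner_comm p z, real_inner_comm p x]
    show ⟪z, p⟫ - w z ≤ ⟪x, p⟫ - w x
    linarith [h1, h2.ge, h2.le]

lemma contOn_tildePot {Ω : Set (Euc n)} {u : Euc n → ℝ} (hc : ContinuousOn u Ω) :
    ContinuousOn (tildePot n u) Ω :=
  (continuousOn_const.mul hc).add
    ((continuous_const.mul (continuous_norm.pow 2)).continuousOn)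

lemma key_open {Ω : Set (Euc n)} (hΩo : IsOpen Ω) (hΩc : Convex ℝ Ω) {u : Euc n → ℝ}
    (hu : ConvexOn ℝ Ω u) (hcont : ContinuousOn u Ω) {p x₀ : Euc n} (hx₀ : x₀ ∈ Ω)
    (hp : ∀ y ∈ Ω, tildePot n u x₀ + ⟪p, y - x₀⟫ ≤ tildePot n u y) :
    ∃ ε > 0, ∀ q : Euc n, dist q p < ε →
      ∃ x ∈ Ω, ∀ y ∈ Ω, tildePot n u x + ⟪q, y - x⟫ ≤ tildePot n u y := by
  obtain ⟨ε₀, hε₀, hball⟩ := Metric.isOpen_iff.1 hΩo x₀ hx₀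
  set r := ε₀/2 with hrdef
  have hr : 0 < r := by positivity
  have hB : closedBall x₀ r ⊆ Ω := (closedBall_subset_ball (by linarith)).trans hball
  refine ⟨r / Real.sqrt 2, by positivity, fun q hq => ?_⟩
  have hcomp : IsCompact (closedBall x₀ r) := isCompact_closedBall _ _
  have hne : (closedBall x₀ r).Nonempty := ⟨x₀, mem_closedBall_self hr.le⟩
  have hfc : ContinuousOn (fun z : Euc n => ⟪z, q⟫ - tildePot n u z) (closedBall x₀ r) :=
    ((continuous_id.inner continuous_const).continuousOn).sub ((contOn_tildePot hcont).mono hB)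
  obtain ⟨xq, hxqB, hmax⟩ := hcomp.exists_isMaxOn hne hfc
  have hqB : ∀ z ∈ closedBall x₀ r, tildePot n u xq + ⟪q, z - xq⟫ ≤ tildePot n u z := by
    intro z hz
    have h1 : ⟪z, q⟫ - tildePot n u z ≤ ⟪xq, q⟫ - tildePot n u xq := hmax hz
    have h2 : ⟪q, z - xq⟫ = ⟪z, q⟫ - ⟪xq, q⟫ := by
      rw [inner_sub_right, real_inner_comm q z, real_inner_comm q xq]
    linarith [h1, h2.le, h2.ge]
  have hpB : ∀ z ∈ closedBall x₀ r, tildePot n u x₀ + ⟪p, z - x₀⟫ ≤ tildePot n u z :=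
    fun z hz => hp z (hB hz)
  have huB : ConvexOn ℝ (closedBall x₀ r) u := hu.subset hB (convex_closedBall _ _)
  have hdist := subgrad_dist (convex_closedBall x₀ r) huB hxqB
    (mem_closedBall_self hr.le) hqB hpB
  have hlt : ‖xq - x₀‖ < r := by
    have hqp : ‖q - p‖ < r / Real.sqrt 2 := by rw [← dist_eq_norm]; exact hq
    have h3 : Real.sqrt 2 * ‖q - p‖ < r := by
      have := mul_lt_mul_of_pos_left hqp s2pos
      rwa [mul_div_cancel₀ _ (ne_of_gt s2pos)] at this
    linarith [hdist]
  have hxqΩ : xq ∈ Ω := hB (mem_closedBall.2 (by rw [dist_eq_norm]; exact hlt.le))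
  refine ⟨xq, hxqΩ, fun y hy => ?_⟩
  set M := ‖y - xq‖ with hMdef
  have hM : 0 ≤ M := norm_nonneg _
  have hδ : 0 < r - ‖xq - x₀‖ := by linarith
  set t := min 1 ((r - ‖xq - x₀‖)/(M+1)) with htdef
  have ht0 : 0 < t := lt_min one_pos (by positivity)
  have ht1 : t ≤ 1 := min_le_left _ _
  have hzB : xq + t•(y - xq) ∈ closedBall x₀ r := by
    rw [mem_closedBall, dist_eq_norm, show xq + t•(y - xq) - x₀ = (xq - x₀) + t•(y - xq) by abel]
    have h4 : ‖(xq - x₀) + t•(y - xq)‖ ≤ ‖xq - x₀‖ + t*M := by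
      refine (norm_add_le _ _).trans ?_
      rw [norm_smul, Real.norm_eq_abs, abs_of_nonneg ht0.le]
    have h5 : t ≤ (r - ‖xq - x₀‖)/(M+1) := min_le_right _ _
    have h6 : t*(M+1) ≤ r - ‖xq - x₀‖ := by
      have h7 := mul_le_mul_of_nonneg_right h5 (show (0:ℝ) ≤ M+1 by linarith)
      rwa [div_mul_cancel₀ _ (show M+1 ≠ 0 by linarith)] at h7
    linarith [h4, h6, ht0.le]
  have h1 := hqB _ hzB
  have h2 := (convexOn_tildePot hΩc hu).2 hxqΩ hy (show (0:ℝ) ≤ 1-t by linarith) ht0.le (by ring)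
  rw [show (1-t)•xq + t•y = xq + t•(y - xq) by module] at h2
  rw [show ⟪q, xq + t•(y - xq) - xq⟫ = t*⟪q, y - xq⟫ by
    rw [add_sub_cancel_left, real_inner_smul_right]] at h1
  simp only [smul_eq_mul] at h2
  have h8 : t * (tildePot n u xq + ⟪q, y - xq⟫) ≤ t * tildePot n u y := by nlinarith [h1, h2]
  have h9 := le_of_mul_le_mul_left h8 ht0
  linarith

/-- √2-multiplied strong subgradient inequality -/
lemma strong_subgrad2 {S : Set (Euc n)} (hS : Convex ℝ S) {u : Euc n → ℝ}
    (hu : ConvexOn ℝ S u) {x y p : Euc n} (hx : x ∈ S) (hy : y ∈ S)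
    (hp : ∀ z ∈ S, tildePot n u x + ⟪p, z - x⟫ ≤ tildePot n u z) :
    Real.sqrt 2 * tildePot n u x + Real.sqrt 2 * ⟪p, y - x⟫ + ‖y - x‖ ^ 2 / 2
      ≤ Real.sqrt 2 * tildePot n u y := by
  have h := strong_subgrad hS hu hx hy hp
  have h2 := mul_le_mul_of_nonneg_left h s2pos.le
  have h3 : Real.sqrt 2 * ((2*Real.sqrt 2)⁻¹ * ‖y-x‖^2) = ‖y-x‖^2/2 := by
    rw [mul_inv, show Real.sqrt 2 * ((2:ℝ)⁻¹ * (Real.sqrt 2)⁻¹ * ‖y-x‖^2)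
      = (Real.sqrt 2 * (Real.sqrt 2)⁻¹) * (2⁻¹ * ‖y-x‖^2) by ring,
      mul_inv_cancel₀ s2pos.ne']
    ring
  nlinarith [h2, h3]

end RotAux

end AuxSection

set_option maxHeartbeats 1600000 in
/-- the π/4-rotated potential `ū` is differentiable on `Ω̄ = ∂ũ(Ω)`, its
gradient is locally Lipschitz with constant `1`, and `−Iₙ ≤ D²ū ≤ Iₙ` in the sense that
`ū + |x̄|²/2` and `|x̄|²/2 − ū` are convex on every open convex subset of `Ω̄`. -/
theorem rotated_potential_C11
    (n : ℕ) (Ω : Set (Euc n)) (hΩ_open : IsOpen Ω) (hΩ_convex : Convex ℝ Ω)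
    (u : Euc n → ℝ) (hu_convex : ConvexOn ℝ Ω u) (hu_cont : ContinuousOn u Ω) :
    (∀ p ∈ subdiffImage n Ω (tildePot n u), DifferentiableAt ℝ (rotPotential n Ω u) p) ∧
    (∀ p ∈ subdiffImage n Ω (tildePot n u),
      ∃ U ∈ 𝓝[subdiffImage n Ω (tildePot n u)] p,
        LipschitzOnWith 1 (gradient (rotPotential n Ω u)) U) ∧
    (∀ V ⊆ subdiffImage n Ω (tildePot n u), IsOpen V → Convex ℝ V →
      ConvexOn ℝ V (fun p => rotPotential n Ω u p + ‖p‖ ^ 2 / 2) ∧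
      ConvexOn ℝ V (fun p => ‖p‖ ^ 2 / 2 - rotPotential n Ω u p)) := by
  classical
  set S : Set (Euc n) := subdiffImage n Ω (tildePot n u) with hSdef
  set L : Euc n → ℝ := legendreTransform n Ω (tildePot n u) with hLdef
  have hmem : ∀ p ∈ S, ∃ x ∈ Ω, ∀ y ∈ Ω, tildePot n u x + ⟪p, y - x⟫ ≤ tildePot n u y := by
    intro p hp
    rw [hSdef, subdiffImage, Set.mem_iUnion₂] at hp
    obtain ⟨x, hx, hpx⟩ := hp
    exact ⟨x, hx, fun y hy => hpx y hy⟩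
  have hmem' : ∀ (p x : Euc n), x ∈ Ω →
      (∀ y ∈ Ω, tildePot n u x + ⟪p, y - x⟫ ≤ tildePot n u y) → p ∈ S := by
    intro p x hx h
    rw [hSdef, subdiffImage, Set.mem_iUnion₂]
    exact ⟨x, hx, fun y hy => h y hy⟩
  choose! X hX1 hX2 using hmem
  have hLeq : ∀ p ∈ S, L p = ⟪X p, p⟫ - tildePot n u (X p) := fun p hp =>
    (RotAux.legendre_isGreatest (hX1 p hp) (hX2 p hp)).csSup_eq
  have hLge : ∀ p ∈ S, ∀ z ∈ Ω, ⟪z, p⟫ - tildePot n u z ≤ L p := fun p hp z hz =>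
    le_csSup (RotAux.legendre_isGreatest (hX1 p hp) (hX2 p hp)).bddAbove ⟨z, hz, rfl⟩
  have hrot : ∀ q : Euc n, rotPotential n Ω u q = ‖q‖^2/2 - Real.sqrt 2 * L q := by
    intro q
    have h1 : Real.sqrt 2 * (2*Real.sqrt 2)⁻¹ = 1/2 := by
      rw [mul_inv, show Real.sqrt 2 * ((2:ℝ)⁻¹ * (Real.sqrt 2)⁻¹)
        = (Real.sqrt 2 * (Real.sqrt 2)⁻¹) * 2⁻¹ by ring, mul_inv_cancel₀ RotAux.s2pos.ne']
      norm_num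
    simp only [rotPotential, ← hLdef]
    rw [mul_sub, ← mul_assoc, h1]
    ring
  have hopen : IsOpen S := by
    rw [Metric.isOpen_iff]
    intro p hp
    obtain ⟨ε, hε, hq⟩ := RotAux.key_open hΩ_open hΩ_convex hu_convex hu_cont
      (hX1 p hp) (hX2 p hp)
    refine ⟨ε, hε, fun q hqmem => ?_⟩
    obtain ⟨x, hx, h⟩ := hq q (mem_ball.1 hqmem)
    exact hmem' q x hx h
  have hXdist : ∀ p ∈ S, ∀ q ∈ S, ‖X p - X q‖ ≤ Real.sqrt 2 * ‖p - q‖ := fun p hp q hq =>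
    RotAux.subgrad_dist hΩ_convex hu_convex (hX1 p hp) (hX1 q hq) (hX2 p hp) (hX2 q hq)
  have hXmono : ∀ p ∈ S, ∀ q ∈ S,
      (Real.sqrt 2)⁻¹ * ‖X p - X q‖^2 ≤ ⟪p - q, X p - X q⟫ := fun p hp q hq =>
    RotAux.subgrad_mono hΩ_convex hu_convex (hX1 p hp) (hX1 q hq) (hX2 p hp) (hX2 q hq)
  -- differentiability with explicit gradient
  have hgrad : ∀ p ∈ S, HasGradientAt (rotPotential n Ω u) (p - Real.sqrt 2 • X p) p := by
    intro p hp
    obtain ⟨ε, hε, hball⟩ := Metric.isOpen_iff.1 hopen p hp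
    rw [hasGradientAt_iff_hasFDerivAt, hasFDerivAt_iff_isLittleO_nhds_zero,
      Asymptotics.isLittleO_iff]
    intro c hc
    have hδ : 0 < min ε (c/3) := lt_min hε (by positivity)
    filter_upwards [Metric.ball_mem_nhds (0 : Euc n) hδ] with h hh
    rw [mem_ball_zero_iff] at hh
    have hhε : ‖h‖ < ε := lt_of_lt_of_le hh (min_le_left _ _)
    have hhc : ‖h‖ ≤ c/3 := le_of_lt (lt_of_lt_of_le hh (min_le_right _ _))
    have hqS : p + h ∈ S := hball (by
      rw [mem_ball, dist_eq_norm, add_sub_cancel_left]; exact hhε)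
    have hlow : 0 ≤ L (p+h) - L p - ⟪X p, h⟫ := by
      have h1 := hLge (p+h) hqS (X p) (hX1 p hp)
      have h2 := hLeq p hp
      have h3 : ⟪X p, p + h⟫ = ⟪X p, p⟫ + ⟪X p, h⟫ := inner_add_right _ _ _
      linarith
    have hup : L (p+h) - L p - ⟪X p, h⟫ ≤ Real.sqrt 2 * ‖h‖^2 := by
      have h1 := hLge p hp (X (p+h)) (hX1 _ hqS)
      have h2 := hLeq (p+h) hqS
      have h3 : ⟪X (p+h), p + h⟫ = ⟪X (p+h), p⟫ + ⟪X (p+h), h⟫ := inner_add_right _ _ _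
      have h4 : ⟪X (p+h), h⟫ - ⟪X p, h⟫ = ⟪X (p+h) - X p, h⟫ := (inner_sub_left _ _ _).symm
      have h5 : ⟪X (p+h) - X p, h⟫ ≤ ‖X (p+h) - X p‖ * ‖h‖ := real_inner_le_norm _ _
      have h6 := hXdist (p+h) hqS p hp
      rw [add_sub_cancel_left] at h6
      have h7 : ‖X (p+h) - X p‖ * ‖h‖ ≤ Real.sqrt 2 * ‖h‖^2 := by
        nlinarith [norm_nonneg h, h6, RotAux.s2pos.le]
      linarith
    have hup2 : Real.sqrt 2 * (L (p+h) - L p - ⟪X p, h⟫) ≤ 2*‖h‖^2 := by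
      nlinarith [mul_le_mul_of_nonneg_left hup RotAux.s2pos.le, RotAux.s2sq, sq_nonneg ‖h‖]
    have hlow2 : 0 ≤ Real.sqrt 2 * (L (p+h) - L p - ⟪X p, h⟫) :=
      mul_nonneg RotAux.s2pos.le hlow
    have hns : ‖p+h‖^2 = ‖p‖^2 + 2*⟪p,h⟫ + ‖h‖^2 := norm_add_sq_real p h
    have hinner : ⟪p - Real.sqrt 2 • X p, h⟫ = ⟪p,h⟫ - Real.sqrt 2*⟪X p,h⟫ := by
      rw [inner_sub_left, real_inner_smul_left]
    have hhn : ‖h‖*‖h‖ ≤ (c/3)*‖h‖ := mul_le_mul_of_nonneg_right hhc (norm_nonneg h)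
    have hcn : 0 ≤ c*‖h‖ := mul_nonneg hc.le (norm_nonneg h)
    rw [InnerProductSpace.toDual_apply_apply, hrot (p+h), hrot p, hinner, Real.norm_eq_abs, abs_le]
    constructor
    · nlinarith [hns, hup2, hhn, hcn, norm_nonneg h]
    · nlinarith [hns, hlow2, hhn, hcn, norm_nonneg h]
  have hgradeq : ∀ p ∈ S, gradient (rotPotential n Ω u) p = p - Real.sqrt 2 • X p :=
    fun p hp => (hgrad p hp).gradient
  have hlip : LipschitzOnWith 1 (gradient (rotPotential n Ω u)) S := by
    refine LipschitzOnWith.of_dist_le_mul fun p hp q hq => ?_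
    rw [hgradeq p hp, hgradeq q hq, dist_eq_norm, dist_eq_norm, NNReal.coe_one, one_mul]
    rw [show (p - Real.sqrt 2 • X p) - (q - Real.sqrt 2 • X q)
      = (p - q) - Real.sqrt 2 • (X p - X q) by module]
    have hmono := hXmono p hp q hq
    have hmono2 : ‖X p - X q‖^2 ≤ Real.sqrt 2 * ⟪p - q, X p - X q⟫ := by
      have h2 := mul_le_mul_of_nonneg_left hmono RotAux.s2pos.le
      rwa [← mul_assoc, mul_inv_cancel₀ RotAux.s2pos.ne', one_mul] at h2
    have hsq : ‖(p - q) - Real.sqrt 2 • (X p - X q)‖^2 ≤ ‖p - q‖^2 := by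
      rw [norm_sub_sq_real, real_inner_smul_right, norm_smul, Real.norm_eq_abs,
        abs_of_nonneg RotAux.s2pos.le, mul_pow, Real.sq_sqrt (by norm_num : (0:ℝ) ≤ 2)]
      nlinarith [hmono2]
    nlinarith [hsq, norm_nonneg ((p - q) - Real.sqrt 2 • (X p - X q)), norm_nonneg (p - q)]
  have hconv : ∀ V ⊆ S, IsOpen V → Convex ℝ V →
      ConvexOn ℝ V (fun p => rotPotential n Ω u p + ‖p‖ ^ 2 / 2) ∧
      ConvexOn ℝ V (fun p => ‖p‖ ^ 2 / 2 - rotPotential n Ω u p) := by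
    intro V hVS hVo hVc
    constructor
    · refine ⟨hVc, fun q₁ h1 q₂ h2 a b ha hb hab => ?_⟩
      have hb' : b = 1 - a := by linarith
      subst hb'
      have hqtV : a•q₁ + (1-a)•q₂ ∈ V := hVc h1 h2 ha hb hab
      have hq1S : q₁ ∈ S := hVS h1
      have hq2S : q₂ ∈ S := hVS h2
      have hqtS : a•q₁ + (1-a)•q₂ ∈ S := hVS hqtV
      have hstr1 := RotAux.strong_subgrad2 hΩ_convex hu_convex (hX1 _ hqtS)
        (hX1 q₁ hq1S) (hX2 _ hqtS)
      have hstr2 := RotAux.strong_subgrad2 hΩ_convex hu_convex (hX1 _ hqtS)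
        (hX1 q₂ hq2S) (hX2 _ hqtS)
      rw [real_inner_comm (X q₁ - X (a•q₁ + (1-a)•q₂)) (a•q₁ + (1-a)•q₂)] at hstr1
      rw [real_inner_comm (X q₂ - X (a•q₁ + (1-a)•q₂)) (a•q₁ + (1-a)•q₂)] at hstr2
      have hSig : Real.sqrt 2 * (a*⟪X q₁, q₁⟫ + (1-a)*⟪X q₂, q₂⟫
            - a*⟪X q₁ - X (a•q₁ + (1-a)•q₂), a•q₁ + (1-a)•q₂⟫
            - (1-a)*⟪X q₂ - X (a•q₁ + (1-a)•q₂), a•q₁ + (1-a)•q₂⟫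
            - ⟪X (a•q₁ + (1-a)•q₂), a•q₁ + (1-a)•q₂⟫)
          = Real.sqrt 2 * (a*(1-a)*(⟪X q₁ - X (a•q₁ + (1-a)•q₂), q₁ - q₂⟫
            - ⟪X q₂ - X (a•q₁ + (1-a)•q₂), q₁ - q₂⟫)) := by
        simp only [inner_sub_left, inner_sub_right, inner_add_right, real_inner_smul_right]
        ring
      have hsq1 : (0:ℝ) ≤ ‖(X q₁ - X (a•q₁ + (1-a)•q₂)) - (Real.sqrt 2*(1-a))•(q₁-q₂)‖^2 :=
        sq_nonneg _
      have hsq2 : (0:ℝ) ≤ ‖(X q₂ - X (a•q₁ + (1-a)•q₂)) + (Real.sqrt 2*a)•(q₁-q₂)‖^2 :=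
        sq_nonneg _
      rw [norm_sub_sq_real, real_inner_smul_right, norm_smul, Real.norm_eq_abs,
        abs_of_nonneg (mul_nonneg RotAux.s2pos.le hb), mul_pow, mul_pow,
        Real.sq_sqrt (by norm_num : (0:ℝ) ≤ 2)] at hsq1
      rw [norm_add_sq_real, real_inner_smul_right, norm_smul, Real.norm_eq_abs,
        abs_of_nonneg (mul_nonneg RotAux.s2pos.le ha), mul_pow, mul_pow,
        Real.sq_sqrt (by norm_num : (0:ℝ) ≤ 2)] at hsq2
      have hnid : ‖a•q₁ + (1-a)•q₂‖^2
          = a^2*‖q₁‖^2 + 2*(a*(1-a))*⟪q₁,q₂⟫ + (1-a)^2*‖q₂‖^2 := by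
        rw [norm_add_sq_real, real_inner_smul_left, real_inner_smul_right, norm_smul,
          norm_smul, Real.norm_eq_abs, Real.norm_eq_abs, abs_of_nonneg ha, abs_of_nonneg hb]
        ring
      have hd : ‖q₁-q₂‖^2 = ‖q₁‖^2 - 2*⟪q₁,q₂⟫ + ‖q₂‖^2 := norm_sub_sq_real _ _
      simp only [smul_eq_mul]
      rw [hrot, hrot, hrot, hLeq q₁ hq1S, hLeq q₂ hq2S, hLeq _ hqtS]
      have hf1 := mul_le_mul_of_nonneg_left hstr1 ha
      have hf2 := mul_le_mul_of_nonneg_left hstr2 hb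
      have hf3 := mul_nonneg ha hsq1
      have hf4 := mul_nonneg hb hsq2
      set s : ℝ := Real.sqrt 2
      set T : ℝ := tildePot n u (X (a•q₁ + (1-a)•q₂))
      set T1 : ℝ := tildePot n u (X q₁)
      set T2 : ℝ := tildePot n u (X q₂)
      set P1 : ℝ := ⟪X q₁, q₁⟫
      set P2 : ℝ := ⟪X q₂, q₂⟫
      set W : ℝ := ⟪X (a•q₁ + (1-a)•q₂), a•q₁ + (1-a)•q₂⟫
      set J1 : ℝ := ⟪X q₁ - X (a•q₁ + (1-a)•q₂), a•q₁ + (1-a)•q₂⟫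
      set J2 : ℝ := ⟪X q₂ - X (a•q₁ + (1-a)•q₂), a•q₁ + (1-a)•q₂⟫
      set I1 : ℝ := ⟪X q₁ - X (a•q₁ + (1-a)•q₂), q₁ - q₂⟫
      set I2 : ℝ := ⟪X q₂ - X (a•q₁ + (1-a)•q₂), q₁ - q₂⟫
      set K : ℝ := ⟪q₁, q₂⟫
      set N1 : ℝ := ‖X q₁ - X (a•q₁ + (1-a)•q₂)‖
      set N2 : ℝ := ‖X q₂ - X (a•q₁ + (1-a)•q₂)‖
      set D : ℝ := ‖q₁ - q₂‖
      set m1 : ℝ := ‖q₁‖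
      set m2 : ℝ := ‖q₂‖
      set mt : ℝ := ‖a•q₁ + (1-a)•q₂‖
      nlinarith [hf1, hf2, hf3, hf4, hSig, hnid, hd]
    · refine ⟨hVc, fun q₁ h1 q₂ h2 a b ha hb hab => ?_⟩
      have hb' : b = 1 - a := by linarith
      subst hb'
      have hqtV : a•q₁ + (1-a)•q₂ ∈ V := hVc h1 h2 ha hb hab
      have hq1S : q₁ ∈ S := hVS h1
      have hq2S : q₂ ∈ S := hVS h2
      have hqtS : a•q₁ + (1-a)•q₂ ∈ S := hVS hqtV
      have hb1 := hLge q₁ hq1S (X _ ) (hX1 _ hqtS)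
      have hb2 := hLge q₂ hq2S (X _ ) (hX1 _ hqtS)
      have hexp : ⟪X (a•q₁ + (1-a)•q₂), a•q₁ + (1-a)•q₂⟫
          = a*⟪X (a•q₁ + (1-a)•q₂), q₁⟫ + (1-a)*⟪X (a•q₁ + (1-a)•q₂), q₂⟫ := by
        simp only [inner_add_right, real_inner_smul_right]
      simp only [smul_eq_mul]
      rw [hrot, hrot, hrot, hLeq _ hqtS, hexp]
      have hf1 := mul_le_mul_of_nonneg_left (mul_le_mul_of_nonneg_left hb1 RotAux.s2pos.le) ha
      have hf2 := mul_le_mul_of_nonneg_left (mul_le_mul_of_nonneg_left hb2 RotAux.s2pos.le) hb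
      set s : ℝ := Real.sqrt 2
      set T : ℝ := tildePot n u (X (a•q₁ + (1-a)•q₂))
      set R1 : ℝ := ⟪X (a•q₁ + (1-a)•q₂), q₁⟫
      set R2 : ℝ := ⟪X (a•q₁ + (1-a)•q₂), q₂⟫
      set L1 : ℝ := L q₁
      set L2 : ℝ := L q₂
      set mt : ℝ := ‖a•q₁ + (1-a)•q₂‖
      set m1 : ℝ := ‖q₁‖
      set m2 : ℝ := ‖q₂‖
      nlinarith [hf1, hf2, RotAux.s2pos.le]
  exact ⟨fun p hp => (hgrad p hp).differentiableAt,
    fun p hp => ⟨S, self_mem_nhdsWithin, hlip⟩, hconv⟩
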